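/- Let λ, μ ∈ (0,1) and n ∈ ℕ. Define a_j^{(λ,μ)} := 0 for integers j < 0 and a_j^{(λ,μ)} := √λ · μ^{j/2} · L_j^{(−1)}(−ln λ) for integers j ≥ 0, and let T^{(n)} be the n×n Toeplitz matrix with entries T^{(n)}_{i,k} = a_{i−k}^{(λ,μ)}. Then every singular value s of T^{(n)} satisfies s² ≤ λ^{(1−√μ)/(1+√μ)}. -/

import Mathlib

open MeasureTheory

noncomputable def singularValues {n : ℕ} (A : Matrix (Fin n) (Fin n) ℂ) : Fin n → ℝ :=
  fun i => Real.sqrt ((Matrix.isHermitian_conjTranspose_mul_self A).eigenvalues i)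

/-- Generalised Laguerre polynomial `L_m^{(-1)}`. -/
noncomputable def lagM1 (m : ℕ) (x : ℝ) : ℝ :=
  if m = 0 then 1
  else ∑ l ∈ Finset.Icc 1 m, (Nat.choose (m - 1) (l - 1) : ℝ) * (-x) ^ l / (Nat.factorial l : ℝ)

/-- The sequence `a_j^{(λ,μ)}`, extended by zero to negative indices. -/
noncomputable def aInt (lam mu : ℝ) (j : ℤ) : ℝ :=
  if j < 0 then 0
  else Real.sqrt lam * mu ^ ((j : ℝ) / 2) * lagM1 j.toNat (-Real.log lam)

/-- The Toeplitz matrix built from the sequence `a^{(λ,μ)}`. -/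
noncomputable def toepA (lam mu : ℝ) (n : ℕ) : Matrix (Fin n) (Fin n) ℂ :=
  Matrix.of fun i k => ((aInt lam mu (((i : ℕ) : ℤ) - ((k : ℕ) : ℤ)) : ℝ) : ℂ)

namespace ToepAux

open Matrix

noncomputable def nsq {n : ℕ} (v : Fin n → ℂ) : ℝ := ∑ j, Complex.normSq (v j)

noncomputable def Kmat (n : ℕ) (t : ℝ) : Matrix (Fin n) (Fin n) ℂ :=
  Matrix.of fun i k => if (k : ℕ) < (i : ℕ) then ((t : ℂ)) ^ ((i : ℕ) - (k : ℕ)) else 0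

lemma hockey (N r : ℕ) : ∑ d ∈ Finset.range N, ((d.choose r : ℕ) : ℂ) = ((N.choose (r+1) : ℕ) : ℂ) := by
  induction N with
  | zero => simp
  | succ N ih =>
    rw [Finset.sum_range_succ, ih, ← Nat.cast_add, Nat.choose_succ_succ' N r, Nat.add_comm]

lemma Kmat_pow (n : ℕ) (t : ℝ) (l : ℕ) (hl : 1 ≤ l) (i k : Fin n) :
    (Kmat n t ^ l) i k =
      if (k : ℕ) < (i : ℕ) then
        ((t : ℂ)) ^ ((i : ℕ) - (k : ℕ)) * ((((i : ℕ) - (k : ℕ) - 1).choose (l - 1) : ℕ) : ℂ)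
      else 0 := by
  induction l, hl using Nat.le_induction generalizing i k with
  | base => simp [Kmat, pow_one]
  | succ l hl ih =>
    have hKK : (Kmat n t ^ (l + 1)) i k = ∑ m : Fin n, Kmat n t i m * (Kmat n t ^ l) m k := by
      rw [pow_succ']
      rfl
    rw [hKK]
    have hsum : ∀ m : Fin n, Kmat n t i m * (Kmat n t ^ l) m k =
        (fun mm : ℕ => if (k : ℕ) < mm ∧ mm < (i : ℕ) then
          ((t:ℂ)) ^ ((i:ℕ) - (k:ℕ)) * (((mm - (k:ℕ) - 1).choose (l-1) : ℕ) : ℂ) else 0) (m : ℕ) := by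
      intro m
      rw [ih]
      simp only [Kmat, Matrix.of_apply]
      by_cases h1 : (m : ℕ) < (i : ℕ)
      · by_cases h2 : (k : ℕ) < (m : ℕ)
        · rw [if_pos h1, if_pos h2, if_pos ⟨h2, h1⟩, ← mul_assoc, ← pow_add]
          congr 2
          omega
        · rw [if_neg h2, mul_zero, if_neg (by omega)]
      · rw [if_neg h1, zero_mul, if_neg (by omega)]
    rw [Finset.sum_congr rfl (fun m _ => hsum m),
      Fin.sum_univ_eq_sum_range (fun mm : ℕ => if (k : ℕ) < mm ∧ mm < (i : ℕ) then
          ((t:ℂ)) ^ ((i:ℕ) - (k:ℕ)) * (((mm - (k:ℕ) - 1).choose (l-1) : ℕ) : ℂ) else 0) n]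
    by_cases hik : (k : ℕ) < (i : ℕ)
    · have hsub : Finset.Ioo (k:ℕ) (i:ℕ) ⊆ Finset.range n := by
        intro mm hmm
        simp only [Finset.mem_Ioo] at hmm
        exact Finset.mem_range.2 (lt_trans hmm.2 i.isLt)
      rw [if_pos hik,
        ← Finset.sum_subset hsub (by
          intro mm _ hmm
          simp only [Finset.mem_Ioo, not_and, not_lt] at hmm
          rw [if_neg (by omega)]),
        Finset.sum_congr rfl (fun mm hmm => by
          simp only [Finset.mem_Ioo] at hmm
          rw [if_pos ⟨hmm.1, hmm.2⟩]),
        ← Finset.mul_sum, ← Finset.Ico_add_one_left_eq_Ioo, Finset.sum_Ico_eq_sum_range,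
        Finset.sum_congr rfl (fun j _ => by
          rw [show (k:ℕ) + 1 + j - (k:ℕ) - 1 = j from by omega]),
        hockey]
      congr 3 <;> omega
    · rw [if_neg hik]
      apply Finset.sum_eq_zero
      intro mm _
      rw [if_neg (by omega)]

lemma Kmat_pow_n (n : ℕ) (t : ℝ) : Kmat n t ^ n = 0 := by
  rcases Nat.eq_zero_or_pos n with h | h
  · subst h; exact Subsingleton.elim _ _
  · ext i k
    rw [Kmat_pow n t n h i k]
    by_cases hik : (k : ℕ) < (i : ℕ)
    · rw [if_pos hik, Nat.choose_eq_zero_of_lt (by omega)]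
      simp
    · simp [hik]

noncomputable def Mmat (n : ℕ) (t : ℝ) : Matrix (Fin n) (Fin n) ℂ :=
  Matrix.of fun i k => if (i : ℕ) = (k : ℕ) + 1 then (t : ℂ) else 0

lemma MK_id (n : ℕ) (t : ℝ) : Kmat n t = Mmat n t + Mmat n t * Kmat n t := by
  ext i k
  simp only [Matrix.add_apply, Matrix.mul_apply, Mmat, Kmat, Matrix.of_apply]
  rcases Nat.eq_zero_or_pos (i : ℕ) with hi | hi
  · rw [Finset.sum_eq_zero (fun m _ => by rw [if_neg (by omega), zero_mul]),
      if_neg (by omega), if_neg (by omega), add_zero]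
  · have hlt : (i : ℕ) - 1 < n := by omega
    rw [Finset.sum_eq_single (⟨(i : ℕ) - 1, hlt⟩ : Fin n)
        (fun m _ hm => by rw [if_neg (fun h => hm (Fin.ext (by simp at h ⊢; omega))), zero_mul])
        (fun h => absurd (Finset.mem_univ _) h)]
    simp only [Fin.val_mk]
    rw [if_pos (show (i:ℕ) = (i:ℕ) - 1 + 1 by omega)]
    split_ifs <;>
      first
        | (exfalso; omega)
        | (rw [zero_add, ← pow_succ']
           congr 1
           omega)
        | (rw [mul_zero, add_zero, show (i:ℕ) - (k:ℕ) = 1 from by omega, pow_one])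
        | ring1

lemma KM_id (n : ℕ) (t : ℝ) : Kmat n t = Mmat n t + Kmat n t * Mmat n t := by
  ext i k
  simp only [Matrix.add_apply, Matrix.mul_apply, Mmat, Kmat, Matrix.of_apply]
  by_cases hkn : (k : ℕ) + 1 < n
  · rw [Finset.sum_eq_single (⟨(k : ℕ) + 1, hkn⟩ : Fin n)
        (fun m _ hm => by
          have hcond : ¬ ((m:ℕ) = (k:ℕ)+1) :=
            fun h => hm (Fin.ext (by simp only [Fin.val_mk]; exact h))
          simp [hcond])
        (fun h => absurd (Finset.mem_univ _) h)]
    simp only [Fin.val_mk, if_pos rfl]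
    split_ifs <;>
      first
        | (exfalso; omega)
        | (rw [zero_add, ← pow_succ]
           congr 1
           omega)
        | (rw [zero_mul, add_zero, show (i:ℕ) - (k:ℕ) = 1 from by omega, pow_one])
        | ring1
  · rw [Finset.sum_eq_zero (fun m _ => by
        simp [(show ¬ ((m:ℕ) = (k:ℕ)+1) from by omega)]),
      if_neg (by omega), if_neg (by omega), add_zero]

lemma nsq_nonneg {n : ℕ} (v : Fin n → ℂ) : 0 ≤ nsq v :=
  Finset.sum_nonneg fun _ _ => Complex.normSq_nonneg _

lemma re_star_dot_self {n : ℕ} (v : Fin n → ℂ) :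
    (dotProduct (star v) v).re = nsq v := by
  simp only [dotProduct, Pi.star_apply, Complex.re_sum, nsq]
  congr 1
  ext j
  rw [Complex.star_def, mul_comm, Complex.mul_conj]
  simp

lemma sqrt_nsq_eq_norm {n : ℕ} (v : Fin n → ℂ) :
    Real.sqrt (nsq v) = ‖(WithLp.equiv 2 (Fin n → ℂ)).symm v‖ := by
  rw [EuclideanSpace.norm_eq]
  congr 1
  apply Finset.sum_congr rfl
  intro j _
  simp [Complex.sq_norm, nsq]

lemma cs_lower {n : ℕ} (v w : Fin n → ℂ) :
    -(Real.sqrt (nsq v) * Real.sqrt (nsq w)) ≤ (dotProduct (star v) w).re := by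
  have h1 : dotProduct (star v) w =
      @inner ℂ _ _ ((WithLp.equiv 2 (Fin n → ℂ)).symm v) ((WithLp.equiv 2 (Fin n → ℂ)).symm w) :=
    by rw [dotProduct_comm]; rfl
  rw [h1, sqrt_nsq_eq_norm, sqrt_nsq_eq_norm]
  have h2 := norm_inner_le_norm (𝕜 := ℂ)
    ((WithLp.equiv 2 (Fin n → ℂ)).symm v) ((WithLp.equiv 2 (Fin n → ℂ)).symm w)
  have h3 := Complex.abs_re_le_norm
    (@inner ℂ _ _ ((WithLp.equiv 2 (Fin n → ℂ)).symm v) ((WithLp.equiv 2 (Fin n → ℂ)).symm w))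
  have := abs_le.1 (h3.trans h2)
  linarith [this.1]

lemma Mmat_mulVec_succ {m : ℕ} (t : ℝ) (u : Fin (m+1) → ℂ) (i : Fin m) :
    (Mmat (m+1) t *ᵥ u) i.succ = (t : ℂ) * u i.castSucc := by
  simp only [Matrix.mulVec, dotProduct, Mmat, Matrix.of_apply]
  rw [Finset.sum_eq_single i.castSucc]
  · rw [if_pos (by simp)]
  · intro b _ hb
    rw [if_neg (fun h => hb (Fin.ext (by simpa using h.symm))), zero_mul]
  · intro h
    exact absurd (Finset.mem_univ _) h

lemma Mmat_mulVec_zero {m : ℕ} (t : ℝ) (u : Fin (m+1) → ℂ) :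
    (Mmat (m+1) t *ᵥ u) 0 = 0 := by
  simp only [Matrix.mulVec, dotProduct, Mmat, Matrix.of_apply]
  apply Finset.sum_eq_zero
  intro b _
  rw [if_neg (by simp), zero_mul]

lemma nsq_Mmat_le {n : ℕ} (t : ℝ) (u : Fin n → ℂ) :
    nsq (Mmat n t *ᵥ u) ≤ t^2 * nsq u := by
  cases n with
  | zero => simp [nsq]
  | succ m =>
    rw [nsq, Fin.sum_univ_succ, Mmat_mulVec_zero]
    simp only [Complex.normSq_zero, zero_add]
    calc ∑ i : Fin m, Complex.normSq ((Mmat (m+1) t *ᵥ u) i.succ)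
        = ∑ i : Fin m, t^2 * Complex.normSq (u i.castSucc) := by
          apply Finset.sum_congr rfl
          intro i _
          rw [Mmat_mulVec_succ]
          simp [Complex.normSq_mul, sq]
      _ = t^2 * ∑ i : Fin m, Complex.normSq (u i.castSucc) := by rw [Finset.mul_sum]
      _ ≤ t^2 * nsq u := by
          apply mul_le_mul_of_nonneg_left _ (sq_nonneg t)
          rw [nsq, Fin.sum_univ_castSucc]
          have := Complex.normSq_nonneg (u (Fin.last m))
          linarith

lemma arith_key (t a b r : ℝ) (ht0 : 0 ≤ t) (ht1 : t ≤ 1) (ha : 0 ≤ a) (hb0 : 0 ≤ b)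
    (hb : b ≤ t*a) (hr : -(a*b) ≤ r) :
    -(t/(1+t)) * (a^2 - 2*r + b^2) ≤ r - b^2 := by
  have h1t : (0:ℝ) < 1 + t := by linarith
  have key : 0 ≤ ((1-t)*r + t*a^2 - b^2) := by
    nlinarith [mul_nonneg (sub_nonneg.2 hb) (add_nonneg ha hb0)]
  have h2 : (r - b^2) + (t/(1+t))*(a^2-2*r+b^2) = ((1-t)*r + t*a^2 - b^2)/(1+t) := by
    field_simp
    ring
  have h3 : 0 ≤ ((1-t)*r + t*a^2 - b^2)/(1+t) := div_nonneg key (le_of_lt h1t)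
  linarith

lemma one_sub_M_mul (n : ℕ) (t : ℝ) : (1 - Mmat n t) * (1 + Kmat n t) = 1 := by
  have h : (1 - Mmat n t) * (1 + Kmat n t)
      = 1 + Kmat n t - (Mmat n t + Mmat n t * Kmat n t) := by noncomm_ring
  rw [h, ← MK_id n t, add_sub_cancel_right]

lemma K_mul_one_sub_M (n : ℕ) (t : ℝ) : Kmat n t * (1 - Mmat n t) = Mmat n t := by
  have h : Kmat n t * (1 - Mmat n t) = Kmat n t - Kmat n t * Mmat n t := by noncomm_ring
  rw [h]
  nth_rewrite 1 [KM_id n t]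
  rw [add_sub_cancel_right]

lemma dissip {n : ℕ} (t : ℝ) (ht0 : 0 ≤ t) (ht1 : t ≤ 1) (v : Fin n → ℂ) :
    -(t/(1+t)) * nsq v ≤ (dotProduct (star v) (Kmat n t *ᵥ v)).re := by
  obtain ⟨u, hveq⟩ : ∃ u, v = (1 - Mmat n t) *ᵥ u := by
    refine ⟨(1 + Kmat n t) *ᵥ v, ?_⟩
    rw [mulVec_mulVec, one_sub_M_mul, one_mulVec]
  have hKv : Kmat n t *ᵥ v = Mmat n t *ᵥ u := by
    rw [hveq, mulVec_mulVec, K_mul_one_sub_M]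
  have hv' : v = u - Mmat n t *ᵥ u := by rw [hveq, sub_mulVec, one_mulVec]
  set w := Mmat n t *ᵥ u with hw
  -- abbreviations
  set a := Real.sqrt (nsq u) with hadef
  set b := Real.sqrt (nsq w) with hbdef
  set r := (dotProduct (star u) w).re with hrdef
  have ha0 : 0 ≤ a := Real.sqrt_nonneg _
  have hb0 : 0 ≤ b := Real.sqrt_nonneg _
  have ha2 : nsq u = a^2 := (Real.sq_sqrt (nsq_nonneg u)).symm
  have hb2 : nsq w = b^2 := (Real.sq_sqrt (nsq_nonneg w)).symm
  have hb : b ≤ t * a := by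
    have h1 := Real.sqrt_le_sqrt (nsq_Mmat_le t u)
    rwa [Real.sqrt_mul (sq_nonneg t), Real.sqrt_sq ht0, ← hadef, ← hw, ← hbdef] at h1
  have hr : -(a*b) ≤ r := cs_lower u w
  -- re of star v ⬝ᵥ K v
  have hstar : star v = star u - star w := by rw [hv', star_sub]
  have hlhs : (dotProduct (star v) (Kmat n t *ᵥ v)).re = r - b^2 := by
    rw [hKv, hstar, sub_dotProduct, Complex.sub_re, ← hrdef, re_star_dot_self, hb2]
  have hrw : (dotProduct (star w) u).re = r := by
    have h1 : star (dotProduct (star u) w) = dotProduct (star w) u := by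
      rw [← Matrix.star_dotProduct_star, star_star]
    rw [← h1, Complex.star_def, Complex.conj_re]
  have hnv : nsq v = a^2 - 2*r + b^2 := by
    have h1 : nsq v = (dotProduct (star v) v).re := (re_star_dot_self v).symm
    rw [h1, hstar] at *
    nth_rewrite 1 [hv']
    rw [sub_dotProduct, dotProduct_sub, dotProduct_sub, Complex.sub_re,
      Complex.sub_re, Complex.sub_re, re_star_dot_self, re_star_dot_self, hrw, ← hrdef,
      ha2, hb2]
    ring
  rw [hlhs, hnv]
  exact arith_key t a b r ht0 ht1 ha0 hb0 hb hr

noncomputable def Qmat (n : ℕ) (B : Matrix (Fin n) (Fin n) ℂ) (s : ℝ) :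
    Matrix (Fin n) (Fin n) ℂ :=
  ∑ l ∈ Finset.range n, (((s ^ l / l.factorial : ℝ) : ℂ)) • B ^ l

lemma sum_mulVec {n : ℕ} {ι : Type*} (s : Finset ι) (A : ι → Matrix (Fin n) (Fin n) ℂ)
    (v : Fin n → ℂ) : (∑ l ∈ s, A l) *ᵥ v = ∑ l ∈ s, (A l *ᵥ v) := by
  induction s using Finset.cons_induction with
  | empty => simp [Matrix.zero_mulVec]
  | cons a s ha ih => simp only [Finset.sum_cons, Matrix.add_mulVec, ih]

lemma Qmat_mulVec_apply {n : ℕ} (B : Matrix (Fin n) (Fin n) ℂ) (v : Fin n → ℂ) (s : ℝ)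
    (i : Fin n) :
    (Qmat n B s *ᵥ v) i = ∑ l ∈ Finset.range n, ((s ^ l / l.factorial : ℝ) : ℂ) * ((B ^ l *ᵥ v) i) := by
  rw [Qmat, sum_mulVec]
  rw [Finset.sum_apply]
  apply Finset.sum_congr rfl
  intro l _
  rw [Matrix.smul_mulVec]
  simp

lemma Qmat_zero {n : ℕ} (hn : 0 < n) (B : Matrix (Fin n) (Fin n) ℂ) : Qmat n B 0 = 1 := by
  rw [Qmat, Finset.sum_eq_single 0]
  · simp
  · intro l _ hl
    have : (0:ℝ) ^ l = 0 := zero_pow hl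
    simp [this]
  · intro h
    exact absurd (Finset.mem_range.2 hn) h

lemma hasDerivAt_Qmat_mulVec {n : ℕ} (B : Matrix (Fin n) (Fin n) ℂ) (hB : B ^ n = 0)
    (v : Fin n → ℂ) (s : ℝ) (i : Fin n) :
    HasDerivAt (fun s => (Qmat n B s *ᵥ v) i) ((B *ᵥ (Qmat n B s *ᵥ v)) i) s := by
  have hn : 0 < n := i.pos
  obtain ⟨m, rfl⟩ : ∃ m, n = m + 1 := ⟨n - 1, by omega⟩
  have hfe : (fun s : ℝ => (Qmat (m+1) B s *ᵥ v) i)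
      = fun s : ℝ => ∑ l ∈ Finset.range (m+1),
          ((s ^ l / l.factorial : ℝ) : ℂ) * ((B ^ l *ᵥ v) i) :=
    funext fun s => Qmat_mulVec_apply B v s i
  have hder : HasDerivAt
      (fun s : ℝ => ∑ l ∈ Finset.range (m+1),
          ((s ^ l / l.factorial : ℝ) : ℂ) * ((B ^ l *ᵥ v) i))
      (∑ l ∈ Finset.range (m+1),
          (((l : ℝ) * s ^ (l-1) / l.factorial : ℝ) : ℂ) * ((B ^ l *ᵥ v) i)) s :=
    HasDerivAt.fun_sum (fun l _ =>
      (((hasDerivAt_pow l s).div_const (l.factorial : ℝ)).ofReal_comp).mul_const _)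
  rw [hfe]
  convert hder using 1
  rw [Matrix.mulVec_mulVec]
  have hBQ : B * Qmat (m+1) B s
      = ∑ l ∈ Finset.range (m+1), ((s ^ l / l.factorial : ℝ) : ℂ) • B ^ (l+1) := by
    rw [Qmat, Finset.mul_sum]
    apply Finset.sum_congr rfl
    intro l _
    rw [mul_smul_comm, ← pow_succ']
  rw [hBQ, sum_mulVec, Finset.sum_apply]
  simp only [Matrix.smul_mulVec, Pi.smul_apply, smul_eq_mul]
  rw [Finset.sum_range_succ]
  have hzero : (B ^ (m+1) *ᵥ v) i = 0 := by
    rw [hB, Matrix.zero_mulVec]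
    simp
  rw [hzero, mul_zero, add_zero, Finset.sum_range_succ']
  have h00 : ((((0:ℕ) : ℝ) * s ^ (0-1) / ((Nat.factorial 0 : ℕ) : ℝ) : ℝ) : ℂ)
      * ((B ^ 0 *ᵥ v) i) = 0 := by
    norm_num
  rw [h00, add_zero]
  apply Finset.sum_congr rfl
  intro l _
  congr 2
  rw [Nat.add_sub_cancel, Nat.factorial_succ]
  push_cast
  rw [mul_div_mul_left (s ^ l) _ (by positivity : (0:ℝ) < (l:ℝ)+1).ne']

lemma re_star_mul_comm (x y : ℂ) : (star x * y).re = (star y * x).re := by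
  simp only [Complex.star_def, Complex.mul_re, Complex.conj_re, Complex.conj_im]
  ring

lemma nsq_Qmat_le {n : ℕ} (B : Matrix (Fin n) (Fin n) ℂ) (hB : B ^ n = 0) (om : ℝ)
    (hd : ∀ u : Fin n → ℂ, (dotProduct (star u) (B *ᵥ u)).re ≤ om * nsq u)
    (v : Fin n → ℂ) (s : ℝ) (hs : 0 ≤ s) :
    nsq (Qmat n B s *ᵥ v) ≤ Real.exp (2*om*s) * nsq v := by
  rcases Nat.eq_zero_or_pos n with hn | hn
  · subst hn
    simp [nsq]
  set u : ℝ → Fin n → ℂ := fun s => Qmat n B s *ᵥ v with hu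
  set φ : ℝ → ℝ := fun s => nsq (u s) with hφ
  have hφd : ∀ s : ℝ, HasDerivAt φ
      (2 * (dotProduct (star (u s)) (B *ᵥ u s)).re) s := by
    intro s
    have hterm : ∀ i : Fin n, HasDerivAt (fun s => (star (u s i) * u s i).re)
        ((star ((B *ᵥ u s) i) * u s i + star (u s i) * (B *ᵥ u s) i).re) s := by
      intro i
      have h1 := hasDerivAt_Qmat_mulVec B hB v s i
      have h2 : HasDerivAt (fun s => star (u s i) * u s i)
          (star ((B *ᵥ u s) i) * u s i + star (u s i) * (B *ᵥ u s) i) s :=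
        HasDerivAt.mul h1.star h1
      exact Complex.reCLM.hasFDerivAt.comp_hasDerivAt s h2
    have hsum : HasDerivAt (fun s => ∑ i : Fin n, (star (u s i) * u s i).re)
        (∑ i : Fin n, (star ((B *ᵥ u s) i) * u s i + star (u s i) * (B *ᵥ u s) i).re) s :=
      HasDerivAt.fun_sum (fun i _ => hterm i)
    have hφeq : φ = fun s => ∑ i : Fin n, (star (u s i) * u s i).re := by
      funext s
      rw [hφ]
      simp only
      rw [← re_star_dot_self]
      simp [dotProduct, Complex.re_sum]
    rw [hφeq]
    convert hsum using 1
    rw [dotProduct, Complex.re_sum, Finset.mul_sum]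
    apply Finset.sum_congr rfl
    intro i _
    rw [Complex.add_re, re_star_mul_comm (((B *ᵥ u s) i)) (u s i)]
    simp only [Pi.star_apply]
    ring
  set ψ : ℝ → ℝ := fun s => φ s * Real.exp (-(2*om)*s) with hψ
  have hψd : ∀ s : ℝ, HasDerivAt ψ
      ((2 * (dotProduct (star (u s)) (B *ᵥ u s)).re) * Real.exp (-(2*om)*s)
        + φ s * (Real.exp (-(2*om)*s) * (-(2*om)))) s := by
    intro s
    have hexp : HasDerivAt (fun s : ℝ => Real.exp (-(2*om)*s))
        (Real.exp (-(2*om)*s) * (-(2*om))) s := by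
      simpa using ((hasDerivAt_id s).const_mul (-(2*om))).exp
    exact (hφd s).mul hexp
  have hψanti : Antitone ψ := by
    apply antitone_of_deriv_nonpos
    · intro s
      exact (hψd s).differentiableAt
    · intro s
      rw [(hψd s).deriv]
      have h1 : (dotProduct (star (u s)) (B *ᵥ u s)).re ≤ om * nsq (u s) := hd (u s)
      have h2 : (0:ℝ) < Real.exp (-(2*om)*s) := Real.exp_pos _
      have h3 : φ s = nsq (u s) := rfl
      nlinarith [h2]
  have hψ0 : ψ 0 = nsq v := by
    rw [hψ]
    simp only
    rw [hφ]
    simp only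
    rw [hu]
    simp only
    rw [Qmat_zero hn, Matrix.one_mulVec]
    simp
  have hmono := hψanti hs
  rw [hψ0] at hmono
  -- hmono : φ s * exp(-(2om)s) ≤ nsq v
  have hE : Real.exp (-(2*om)*s) * Real.exp (2*om*s) = 1 := by
    rw [← Real.exp_add]
    simp
  have h2 := mul_le_mul_of_nonneg_right hmono (Real.exp_pos (2*om*s)).le
  rw [mul_assoc, hE, mul_one] at h2
  calc nsq (Qmat n B s *ᵥ v) = φ s := rfl
    _ ≤ nsq v * Real.exp (2*om*s) := h2
    _ = Real.exp (2*om*s) * nsq v := mul_comm _ _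

lemma toepA_eq (lam mu : ℝ) (hlam : lam ∈ Set.Ioo (0:ℝ) 1) (hmu : mu ∈ Set.Ioo (0:ℝ) 1)
    (n : ℕ) :
    toepA lam mu n
      = (Real.sqrt lam : ℂ) • Qmat n (-(Kmat n (Real.sqrt mu))) (-Real.log lam) := by
  set t := Real.sqrt mu with ht
  set x := -Real.log lam with hx
  ext i k
  have hQapp : (Qmat n (-(Kmat n t)) x) i k
      = ∑ l ∈ Finset.range n, ((x ^ l / l.factorial : ℝ) : ℂ) * (((-(Kmat n t)) ^ l) i k) := by
    rw [Qmat, Matrix.sum_apply]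
    apply Finset.sum_congr rfl
    intro l _
    simp
  have hKl : ∀ l : ℕ, ((-(Kmat n t)) ^ l) = ((-1 : ℂ) ^ l) • (Kmat n t ^ l) := by
    intro l
    rw [← neg_one_smul ℂ (Kmat n t), smul_pow]
  simp only [toepA, Matrix.of_apply, Matrix.smul_apply, hQapp, smul_eq_mul]
  rcases lt_trichotomy ((i:ℕ)) ((k:ℕ)) with hik | hik | hik
  · -- i < k : both sides zero
    have hL : aInt lam mu (((i:ℕ) : ℤ) - ((k:ℕ) : ℤ)) = 0 := by
      rw [aInt, if_pos (by omega)]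
    rw [hL, Finset.sum_eq_zero, mul_zero]
    · simp
    · intro l _
      rcases Nat.eq_zero_or_pos l with rfl | hl1
      · simp [Matrix.one_apply_ne (fun h => by simp [Fin.ext_iff] at h; omega : i ≠ k)]
      · rw [hKl, Matrix.smul_apply, Kmat_pow n t l hl1, if_neg (by omega)]
        simp
  · -- i = k : both sides √lam
    obtain rfl : i = k := Fin.val_injective hik
    have hL : aInt lam mu (((i:ℕ) : ℤ) - ((i:ℕ) : ℤ)) = Real.sqrt lam := by
      rw [sub_self, aInt, if_neg (by omega)]
      norm_num [lagM1, Real.rpow_zero]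
    rw [hL]
    have hR : ∑ l ∈ Finset.range n, ((x ^ l / l.factorial : ℝ) : ℂ) * (((-(Kmat n t)) ^ l) i i)
        = 1 := by
      rw [Finset.sum_eq_single 0]
      · simp [Matrix.one_apply_eq]
      · intro l _ hl1
        rw [hKl, Matrix.smul_apply, Kmat_pow n t l (Nat.pos_of_ne_zero hl1), if_neg (by omega)]
        simp
      · intro h
        exact absurd (Finset.mem_range.2 i.pos) h
    rw [hR, mul_one]
  · -- k < i
    set j : ℕ := (i:ℕ) - (k:ℕ) with hj
    have hj1 : 1 ≤ j := by omega
    have hjn : j < n := by omega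
    have htn : Int.toNat (((i:ℕ) : ℤ) - ((k:ℕ) : ℤ)) = j := by omega
    have hrpow : mu ^ ((((((i:ℕ) : ℤ) - ((k:ℕ) : ℤ)) : ℤ) : ℝ) / 2) = t ^ j := by
      have hc : ((((i:ℕ) : ℤ) - ((k:ℕ) : ℤ) : ℤ) : ℝ) = (j : ℝ) := by
        rw [show (((i:ℕ) : ℤ) - ((k:ℕ) : ℤ)) = (j : ℤ) from by omega]
        simp
      rw [hc, ht, Real.sqrt_eq_rpow, ← Real.rpow_natCast (mu ^ (1/(2:ℝ))) j,
        ← Real.rpow_mul hmu.1.le]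
      congr 1
      ring
    have hL : aInt lam mu (((i:ℕ) : ℤ) - ((k:ℕ) : ℤ))
        = Real.sqrt lam * (t ^ j * lagM1 j x) := by
      rw [aInt, if_neg (by omega), htn, hrpow, hx, mul_assoc]
    rw [hL]
    have hterm : ∀ l ∈ Finset.range n,
        ((x ^ l / l.factorial : ℝ) : ℂ) * (((-(Kmat n t)) ^ l) i k)
        = if 1 ≤ l then
            ((((j-1).choose (l-1) : ℕ) : ℝ) * (-x)^l / (l.factorial : ℝ) * t ^ j : ℝ) else 0 := by
      intro l _
      rcases Nat.eq_zero_or_pos l with rfl | hl1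
      · simp [Matrix.one_apply_ne (fun h => by simp [Fin.ext_iff] at h; omega : i ≠ k)]
      · rw [hKl, Matrix.smul_apply, Kmat_pow n t l hl1, if_pos hik,
          if_pos (show 1 ≤ l from hl1), ← hj]
        simp only [smul_eq_mul]
        push_cast
        ring
    rw [Finset.sum_congr rfl hterm]
    have hsub : Finset.Icc 1 j ⊆ Finset.range n := by
      intro l hl
      simp only [Finset.mem_Icc] at hl
      exact Finset.mem_range.2 (by omega)
    rw [← Finset.sum_subset hsub (by
      intro l hl hnot
      simp only [Finset.mem_Icc, not_and, not_le] at hnot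
      by_cases h1 : 1 ≤ l
      · rw [if_pos h1, Nat.choose_eq_zero_of_lt (by omega)]
        simp
      · rw [if_neg h1]
        simp)]
    rw [Finset.sum_congr rfl (fun l hl => by rw [if_pos (Finset.mem_Icc.1 hl).1]),
      ← Complex.ofReal_sum]
    have hlag : lagM1 j x = ∑ l ∈ Finset.Icc 1 j,
        ((((j-1).choose (l-1) : ℕ) : ℝ) * (-x)^l / (l.factorial : ℝ)) := by
      rw [lagM1, if_neg (by omega)]
    rw [show ∑ l ∈ Finset.Icc 1 j,
          ((((j-1).choose (l-1) : ℕ) : ℝ) * (-x)^l / (l.factorial : ℝ) * t ^ j)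
        = (∑ l ∈ Finset.Icc 1 j,
          ((((j-1).choose (l-1) : ℕ) : ℝ) * (-x)^l / (l.factorial : ℝ))) * t ^ j from
      (Finset.sum_mul ..).symm, ← hlag]
    push_cast
    ring

lemma nsq_smul {n : ℕ} (c : ℂ) (v : Fin n → ℂ) :
    nsq (c • v) = Complex.normSq c * nsq v := by
  simp [nsq, Complex.normSq_mul, Finset.mul_sum]

end ToepAux

open Matrix

/-- Every singular value `s` of the Toeplitz matrix `T^{(n)}` built from the
sequence `a^{(λ,μ)}` satisfies `s² ≤ λ^{(1-√μ)/(1+√μ)}`. -/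
theorem toepA_singularValues_sq_bound
    (lam mu : ℝ) (hlam : lam ∈ Set.Ioo (0:ℝ) 1) (hmu : mu ∈ Set.Ioo (0:ℝ) 1) (n : ℕ) :
    ∀ i : Fin n, (singularValues (toepA lam mu n) i) ^ 2
      ≤ lam ^ ((1 - Real.sqrt mu) / (1 + Real.sqrt mu)) := by
  intro i
  classical
  set t := Real.sqrt mu with ht
  have ht0 : 0 ≤ t := Real.sqrt_nonneg _
  have ht1 : t ≤ 1 := by
    rw [ht, show (1:ℝ) = Real.sqrt 1 from (Real.sqrt_one).symm]
    exact Real.sqrt_le_sqrt hmu.2.le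
  have h1t : (0:ℝ) < 1 + t := by linarith
  set x := -Real.log lam with hx
  have hx0 : 0 ≤ x := by
    rw [hx]
    simp only [neg_nonneg]
    exact Real.log_nonpos hlam.1.le hlam.2.le
  set A := toepA lam mu n with hA
  set hH := Matrix.isHermitian_conjTranspose_mul_self A with hHdef
  set w : Fin n → ℂ := ⇑(hH.eigenvectorBasis i) with hw
  have heig : hH.eigenvalues i = ToepAux.nsq (A *ᵥ w) := by
    rw [hH.eigenvalues_eq i]
    rw [← Matrix.mulVec_mulVec, Matrix.dotProduct_mulVec, ← Matrix.star_mulVec,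
      ← ToepAux.re_star_dot_self (A *ᵥ w)]
    rfl
  have hnw : ToepAux.nsq w = 1 := by
    have h1 : Real.sqrt (ToepAux.nsq w) = ‖(WithLp.equiv 2 (Fin n → ℂ)).symm w‖ :=
      ToepAux.sqrt_nsq_eq_norm w
    have h2 : (WithLp.equiv 2 (Fin n → ℂ)).symm w = hH.eigenvectorBasis i := rfl
    rw [h2, hH.eigenvectorBasis.orthonormal.1 i] at h1
    have h3 := Real.sq_sqrt (ToepAux.nsq_nonneg w)
    rw [h1] at h3
    simpa using h3.symm
  have hKn : (-(ToepAux.Kmat n t)) ^ n = 0 := by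
    rw [← neg_one_smul ℂ (ToepAux.Kmat n t), smul_pow, ToepAux.Kmat_pow_n, smul_zero]
  have hd : ∀ u : Fin n → ℂ, (dotProduct (star u) ((-(ToepAux.Kmat n t)) *ᵥ u)).re
      ≤ (t/(1+t)) * ToepAux.nsq u := by
    intro u
    have h1 := ToepAux.dissip t ht0 ht1 u
    rw [Matrix.neg_mulVec, dotProduct_neg, Complex.neg_re]
    linarith
  have hQ := ToepAux.nsq_Qmat_le (-(ToepAux.Kmat n t)) hKn (t/(1+t)) hd w x hx0
  rw [hnw, mul_one] at hQ
  have hAw : A *ᵥ w = (Real.sqrt lam : ℂ) • (ToepAux.Qmat n (-(ToepAux.Kmat n t)) x *ᵥ w) := by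
    rw [hA, ToepAux.toepA_eq lam mu hlam hmu n, ← ht, ← hx, Matrix.smul_mulVec]
  have hnsqAw : ToepAux.nsq (A *ᵥ w)
      = lam * ToepAux.nsq (ToepAux.Qmat n (-(ToepAux.Kmat n t)) x *ᵥ w) := by
    rw [hAw, ToepAux.nsq_smul]
    congr 1
    rw [Complex.normSq_ofReal, Real.mul_self_sqrt hlam.1.le]
  have hval : singularValues A i ^ 2 = hH.eigenvalues i := by
    rw [singularValues]
    exact Real.sq_sqrt (Matrix.eigenvalues_conjTranspose_mul_self_nonneg A i)
  have hfinal : lam * Real.exp (2*(t/(1+t))*x) = lam ^ ((1 - t) / (1 + t)) := by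
    have hexp : Real.exp (2*(t/(1+t))*x) = lam ^ (-(2*(t/(1+t))) : ℝ) := by
      rw [Real.rpow_def_of_pos hlam.1]
      congr 1
      rw [hx]
      ring
    rw [hexp]
    nth_rewrite 1 [show lam = lam ^ (1:ℝ) from (Real.rpow_one lam).symm]
    rw [← Real.rpow_add hlam.1]
    congr 1
    field_simp
    ring
  calc singularValues A i ^ 2 = hH.eigenvalues i := hval
    _ = ToepAux.nsq (A *ᵥ w) := heig
    _ = lam * ToepAux.nsq (ToepAux.Qmat n (-(ToepAux.Kmat n t)) x *ᵥ w) := hnsqAw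
    _ ≤ lam * Real.exp (2*(t/(1+t))*x) := mul_le_mul_of_nonneg_left hQ hlam.1.le
    _ = lam ^ ((1 - t) / (1 + t)) := hfinal
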